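/- arXiv:1309.6518 — 3 statements merged into one kernel-verified Lean document; each statement's English description precedes it below -/
import Mathlib

section
/- Higher-order fundamental lemma of the calculus of variations: Let f₀,…,f_n be continuous on [a,b] with each f_i being i times continuously differentiable. If ∫_a^b (∑_{i=0}^n f_i(t) η^(i)(t)) dt = 0 for all η ∈ C^{2n}([a,b],ℝ) satisfying η^(j)(a) = η^(j)(b) = 0 for j = 0,…,n-1, then ∑_{i=0}^n (-1)^i f_i^(i)(t) = 0 for all t ∈ [a,b]. -/
open MeasureTheory Set intervalIntegral Metric

private lemma iteratedDeriv_zero_fun' (j : ℕ) :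
    iteratedDeriv j (fun _ : ℝ => (0 : ℝ)) = fun _ => 0 := by
  induction j with
  | zero => simp [iteratedDeriv_zero]
  | succ j ih => rw [iteratedDeriv_succ, ih]; simp

private lemma ibp_aux (n : ℕ) (a b : ℝ) (η : ℝ → ℝ) (hη : ContDiff ℝ (2 * n) η)
    (hb : ∀ j < n, iteratedDeriv j η a = 0 ∧ iteratedDeriv j η b = 0) :
    ∀ i, i ≤ n → ∀ F : ℝ → ℝ, ContDiff ℝ i F →
      ∫ t in a..b, F t * iteratedDeriv i η t
        = (-1 : ℝ) ^ i * ∫ t in a..b, iteratedDeriv i F t * η t := by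
  intro i
  induction i with
  | zero => intro _ F _; simp [iteratedDeriv_zero]
  | succ i ih =>
    intro hi F hF
    have hi' : i ≤ n := Nat.le_of_succ_le hi
    have hin : i < n := hi
    have h1le : (1 : WithTop ℕ∞) ≤ ((i + 1 : ℕ) : WithTop ℕ∞) := by
      exact_mod_cast Nat.le_add_left 1 i
    have hFd : Differentiable ℝ F := hF.differentiable (by exact_mod_cast Nat.succ_ne_zero i)
    have hi2n : (i : WithTop ℕ∞) < ((2 * n : ℕ) : WithTop ℕ∞) := by
      exact_mod_cast (by omega : i < 2 * n)
    have hi12n : ((i + 1 : ℕ) : WithTop ℕ∞) ≤ ((2 * n : ℕ) : WithTop ℕ∞) := by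
      exact_mod_cast (by omega : i + 1 ≤ 2 * n)
    have hηd : Differentiable ℝ (iteratedDeriv i η) :=
      hη.differentiable_iteratedDeriv i hi2n
    have key := intervalIntegral.integral_mul_deriv_eq_deriv_mul
      (u := F) (v := iteratedDeriv i η) (u' := deriv F) (v' := iteratedDeriv (i + 1) η)
      (a := a) (b := b)
      (fun x _ => (hFd x).hasDerivAt)
      (fun x _ => by rw [iteratedDeriv_succ]; exact (hηd x).hasDerivAt)
      ((hF.continuous_deriv h1le).intervalIntegrable a b)
      ((hη.continuous_iteratedDeriv (i + 1) hi12n).intervalIntegrable a b)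
    rw [(hb i hin).1, (hb i hin).2] at key
    have hF' : ContDiff ℝ ((i : WithTop ℕ∞) + 1) F := by
      have : ((i + 1 : ℕ) : WithTop ℕ∞) = (i : WithTop ℕ∞) + 1 := by push_cast; ring
      rwa [this] at hF
    have hderiv : ContDiff ℝ i (deriv F) := (contDiff_succ_iff_deriv.mp hF').2.2
    have ihF := ih hi' (deriv F) hderiv
    rw [← iteratedDeriv_succ'] at ihF
    rw [key, ihF]
    ring

/-- Higher-order fundamental lemma of the calculus of variations. -/
theorem higher_order_fundamental_lemma
    (n : ℕ) (a b : ℝ) (hab : a < b) (f : ℕ → ℝ → ℝ)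
    (hfc : ∀ i ≤ n, Continuous (f i))
    (hf : ∀ i ≤ n, ContDiff ℝ i (f i))
    (h : ∀ η : ℝ → ℝ, ContDiff ℝ (2 * n) η →
      (∀ j < n, iteratedDeriv j η a = 0 ∧ iteratedDeriv j η b = 0) →
      ∫ t in a..b, ∑ i ∈ Finset.range (n + 1), f i t * iteratedDeriv i η t = 0) :
    ∀ t ∈ Set.Icc a b,
      ∑ i ∈ Finset.range (n + 1), (-1 : ℝ) ^ i * iteratedDeriv i (f i) t = 0 := by
  set g : ℝ → ℝ := fun t => ∑ i ∈ Finset.range (n + 1), (-1 : ℝ) ^ i * iteratedDeriv i (f i) t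
    with hg_def
  have hgc : Continuous g := by
    apply continuous_finset_sum
    intro i hi
    exact continuous_const.mul
      ((hf i (Nat.lt_succ_iff.mp (Finset.mem_range.mp hi))).continuous_iteratedDeriv i le_rfl)
  have hint : ∀ η : ℝ → ℝ, ContDiff ℝ (2 * n) η →
      (∀ j < n, iteratedDeriv j η a = 0 ∧ iteratedDeriv j η b = 0) →
      ∫ t in a..b, g t * η t = 0 := by
    intro η hη hbd
    have h1 := h η hη hbd
    have hηc : ∀ i ≤ n, Continuous (iteratedDeriv i η) := fun i hi =>
      hη.continuous_iteratedDeriv i (by exact_mod_cast (by omega : i ≤ 2 * n))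
    have e1 : ∫ t in a..b, ∑ i ∈ Finset.range (n + 1), f i t * iteratedDeriv i η t
        = ∑ i ∈ Finset.range (n + 1), ∫ t in a..b, f i t * iteratedDeriv i η t := by
      apply intervalIntegral.integral_finset_sum
      intro i hi
      have hi' : i ≤ n := Nat.lt_succ_iff.mp (Finset.mem_range.mp hi)
      exact ((hfc i hi').mul (hηc i hi')).intervalIntegrable a b
    have e2 : ∀ i ∈ Finset.range (n + 1),
        ∫ t in a..b, f i t * iteratedDeriv i η t
          = (-1 : ℝ) ^ i * ∫ t in a..b, iteratedDeriv i (f i) t * η t := by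
      intro i hi
      have hi' : i ≤ n := Nat.lt_succ_iff.mp (Finset.mem_range.mp hi)
      exact ibp_aux n a b η hη hbd i hi' (f i) (hf i hi')
    have e3 : ∫ t in a..b, g t * η t
        = ∑ i ∈ Finset.range (n + 1),
            (-1 : ℝ) ^ i * ∫ t in a..b, iteratedDeriv i (f i) t * η t := by
      have : ∀ t, g t * η t
          = ∑ i ∈ Finset.range (n + 1),
              (-1 : ℝ) ^ i * (iteratedDeriv i (f i) t * η t) := by
        intro t
        rw [hg_def]
        rw [Finset.sum_mul]
        apply Finset.sum_congr rfl
        intro i _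
        ring
      simp_rw [this]
      rw [intervalIntegral.integral_finset_sum]
      · apply Finset.sum_congr rfl
        intro i hi
        rw [intervalIntegral.integral_const_mul]
      · intro i hi
        have hi' : i ≤ n := Nat.lt_succ_iff.mp (Finset.mem_range.mp hi)
        exact (continuous_const.mul
          (((hf i hi').continuous_iteratedDeriv i le_rfl).mul
            (hηc 0 (Nat.zero_le n) |>.congr (by simp [iteratedDeriv_zero])))).intervalIntegrable a b
    rw [e3, ← Finset.sum_congr rfl e2, ← e1, h1]
  -- show g = 0 on Ioo a b
  have hIoo : ∀ t ∈ Ioo a b, g t = 0 := by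
    intro t₀ ht₀
    by_contra hne
    set c := g t₀ with hc_def
    have hc : c ≠ 0 := hne
    have hU : IsOpen {x | |g x - c| < |c| / 2} :=
      isOpen_lt (by fun_prop) continuous_const
    have ht₀U : t₀ ∈ {x | |g x - c| < |c| / 2} := by
      simp only [mem_setOf_eq, sub_self, abs_zero]
      exact (show |g t₀ - c| < |c| / 2 by rw [← hc_def, sub_self, abs_zero]; exact half_pos (abs_pos.mpr hc))
    obtain ⟨δ, hδ, hball⟩ := Metric.isOpen_iff.mp (hU.inter isOpen_Ioo) t₀ ⟨ht₀U, ht₀⟩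
    set φ : ContDiffBump t₀ := ⟨δ / 4, δ / 2, by positivity, by linarith⟩ with hφ_def
    set η : ℝ → ℝ := fun x => c * φ x with hη_def
    have hηsmooth : ContDiff ℝ (2 * n) η := contDiff_const.mul φ.contDiff
    have hsubset : closedBall t₀ (δ / 2) ⊆ ball t₀ δ :=
      closedBall_subset_ball (by linarith)
    have hsubIoo : closedBall t₀ (δ / 2) ⊆ Ioo a b :=
      hsubset.trans (hball.trans inter_subset_right)
    have hballU : ball t₀ δ ⊆ {x | |g x - c| < |c| / 2} :=
      hball.trans inter_subset_left
    have hbdry : ∀ j < n, iteratedDeriv j η a = 0 ∧ iteratedDeriv j η b = 0 := by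
      intro j _
      have ha' : a ∉ tsupport (φ : ℝ → ℝ) := by
        rw [φ.tsupport_eq]
        intro hmem
        exact lt_irrefl a (hsubIoo hmem).1
      have hb' : b ∉ tsupport (φ : ℝ → ℝ) := by
        rw [φ.tsupport_eq]
        intro hmem
        exact lt_irrefl b (hsubIoo hmem).2
      have ea : η =ᶠ[nhds a] (fun _ => (0 : ℝ)) := by
        filter_upwards [notMem_tsupport_iff_eventuallyEq.mp ha'] with x hx
        simp [hη_def, hx]
      have eb : η =ᶠ[nhds b] (fun _ => (0 : ℝ)) := by
        filter_upwards [notMem_tsupport_iff_eventuallyEq.mp hb'] with x hx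
        simp [hη_def, hx]
      constructor
      · rw [ea.iteratedDeriv_eq j, iteratedDeriv_zero_fun']
      · rw [eb.iteratedDeriv_eq j, iteratedDeriv_zero_fun']
    have h0 := hint η hηsmooth hbdry
    -- the integrand is nonneg and positive on an interval
    have hposball : ∀ x ∈ ball t₀ δ, 0 < c * g x := by
      intro x hx
      have hxU := hballU hx
      simp only [mem_setOf_eq] at hxU
      have habs := abs_lt.mp hxU
      rcases lt_or_gt_of_ne hc with hneg | hpos
      · have : |c| = -c := abs_of_neg hneg
        nlinarith [habs.1, habs.2]
      · have : |c| = c := abs_of_pos hpos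
        nlinarith [habs.1, habs.2]
    have hnonneg : ∀ x, 0 ≤ g x * η x := by
      intro x
      by_cases hx : φ x = 0
      · simp [hη_def, hx]
      · have hxball : x ∈ ball t₀ (δ / 2) := by
          rw [← φ.support_eq]; exact hx
        have hxδ : x ∈ ball t₀ δ := ball_subset_ball (by linarith) hxball
        have := hposball x hxδ
        have hφn := φ.nonneg (x := x)
        calc (0 : ℝ) ≤ (c * g x) * φ x := mul_nonneg this.le hφn
          _ = g x * η x := by rw [hη_def]; ring
    have hpc : Continuous fun x => g x * η x := by
      apply hgc.mul (continuous_const.mul φ.continuous)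
    set m₁ := t₀ - δ / 4 with hm₁
    set m₂ := t₀ + δ / 4 with hm₂
    have hm₁ball : m₁ ∈ ball t₀ δ := by
      simp only [mem_ball, hm₁, Real.dist_eq]
      rw [abs_of_nonpos (by linarith)]
      linarith
    have hm₂ball : m₂ ∈ ball t₀ δ := by
      simp only [mem_ball, hm₂, Real.dist_eq]
      rw [abs_of_nonneg (by linarith)]
      linarith
    have hm₁Ioo : m₁ ∈ Ioo a b := (hball.trans inter_subset_right) hm₁ball
    have hm₂Ioo : m₂ ∈ Ioo a b := (hball.trans inter_subset_right) hm₂ball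
    have hi1 : IntervalIntegrable (fun x => g x * η x) volume a m₁ := hpc.intervalIntegrable a m₁
    have hi2 : IntervalIntegrable (fun x => g x * η x) volume m₁ m₂ := hpc.intervalIntegrable m₁ m₂
    have hi3 : IntervalIntegrable (fun x => g x * η x) volume m₂ b := hpc.intervalIntegrable m₂ b
    have hsplit : (∫ x in a..m₁, g x * η x) + (∫ x in m₁..m₂, g x * η x)
        + (∫ x in m₂..b, g x * η x) = ∫ x in a..b, g x * η x := by
      rw [intervalIntegral.integral_add_adjacent_intervals hi1 hi2,
        intervalIntegral.integral_add_adjacent_intervals (hi1.trans hi2) hi3]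
    have h2pos : 0 < ∫ x in m₁..m₂, g x * η x := by
      apply intervalIntegral_pos_of_pos_on hi2
      · intro x hx
        have hxin : x ∈ closedBall t₀ (δ / 4) := by
          obtain ⟨hx1, hx2⟩ := hx
          simp only [hm₁] at hx1
          simp only [hm₂] at hx2
          simp only [mem_closedBall, Real.dist_eq, abs_le]
          constructor <;> linarith
        have hone : φ x = 1 := φ.one_of_mem_closedBall hxin
        have hxδ : x ∈ ball t₀ δ :=
          closedBall_subset_ball (show δ / 4 < δ by linarith) hxin
        have := hposball x hxδ
        have : (0:ℝ) < c * g x := this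
        calc (0 : ℝ) < (c * g x) * 1 := by linarith
          _ = g x * η x := by simp only [hη_def, hone]; ring
      · simp only [hm₁, hm₂]; linarith
    have h1nonneg : 0 ≤ ∫ x in a..m₁, g x * η x :=
      intervalIntegral.integral_nonneg hm₁Ioo.1.le fun u _ => hnonneg u
    have h3nonneg : 0 ≤ ∫ x in m₂..b, g x * η x :=
      intervalIntegral.integral_nonneg hm₂Ioo.2.le fun u _ => hnonneg u
    rw [h0] at hsplit
    linarith
  intro t ht
  have hclos : Set.EqOn g (fun _ => (0 : ℝ)) (closure (Ioo a b)) :=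
    Set.EqOn.closure (fun x hx => hIoo x hx) hgc continuous_const
  rw [closure_Ioo hab.ne] at hclos
  exact hclos ht
end

section
/- Natural boundary conditions for the Herglotz problem (first order, free right endpoint): Suppose x ∈ C²([a,b],ℝ) extremizes z(b), where ż = L(t,x,ẋ,z), z(a) = γ, x(a) = α fixed, and x(b) is free. Then x satisfies the generalized Euler–Lagrange equation L_x + L_z L_ẋ - (d/dt)L_ẋ = 0 on [a,b], and the transversality condition λ(b)·L_ẋ(b,x(b),ẋ(b),z(b)) = 0, equivalently L_ẋ(b,x(b),ẋ(b),z(b)) = 0 since λ(b) > 0. -/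
open Set Real MeasureTheory intervalIntegral

namespace HerglotzProofK

noncomputable def cl (u : ℝ) : ℝ := max (-1) (min 1 u)

lemma cl_eq {u : ℝ} (h : |u| ≤ 1) : cl u = u := by
  rw [abs_le] at h
  unfold cl
  rw [min_eq_right h.2, max_eq_right h.1]

lemma abs_cl_le (u : ℝ) : |cl u| ≤ 1 := by
  unfold cl
  rw [abs_le]
  refine ⟨le_max_left _ _, max_le (by norm_num) (min_le_left _ _)⟩

lemma cl_lip (u v : ℝ) : |cl u - cl v| ≤ |u - v| := by
  unfold cl
  calc |max (-1) (min 1 u) - max (-1) (min 1 v)|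
      = |max (min 1 u) (-1) - max (min 1 v) (-1)| := by rw [max_comm (-1), max_comm (-1)]
    _ ≤ |min 1 u - min 1 v| := abs_max_sub_max_le_abs _ _ _
    _ ≤ max |(1:ℝ) - 1| |u - v| := abs_min_sub_min_le_max _ _ _ _
    _ = |u - v| := by simp

lemma abs_cl_le_abs (u : ℝ) : |cl u| ≤ |u| := by
  have := cl_lip u 0
  simpa [cl] using this

lemma cl_cont : Continuous cl := by
  unfold cl
  exact continuous_const.max (continuous_const.min continuous_id)

lemma norm4 (p q r s : ℝ) : ‖((p, q, r, s) : ℝ × ℝ × ℝ × ℝ)‖ = max |p| (max |q| (max |r| |s|)) := by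
  simp [Prod.norm_def, Real.norm_eq_abs]

lemma clm4_apply (Φ : ℝ × ℝ × ℝ × ℝ →L[ℝ] ℝ) (α β δ : ℝ) :
    Φ (0, α, β, δ) = α * Φ (0, 1, 0, 0) + β * Φ (0, 0, 1, 0) + δ * Φ (0, 0, 0, 1) := by
  have h : ((0, α, β, δ) : ℝ × ℝ × ℝ × ℝ)
      = α • ((0:ℝ), (1:ℝ), (0:ℝ), (0:ℝ)) + β • (0, 0, 1, 0) + δ • (0, 0, 0, 1) := by
    simp [Prod.ext_iff]
  rw [h, map_add, map_add, Φ.map_smul, Φ.map_smul, Φ.map_smul, smul_eq_mul, smul_eq_mul,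
    smul_eq_mul]


variable {F : ℝ × ℝ × ℝ × ℝ → ℝ}

lemma hasDerivAt_sec2 (hF : Differentiable ℝ F) (t u v w : ℝ) :
    HasDerivAt (fun s => F (t, s, v, w)) (fderiv ℝ F (t, u, v, w) (0, 1, 0, 0)) u := by
  have hc : HasDerivAt (fun s => ((t, s, v, w) : ℝ × ℝ × ℝ × ℝ)) ((0:ℝ), (1:ℝ), (0:ℝ), (0:ℝ)) u :=
    (hasDerivAt_const u t).prodMk ((hasDerivAt_id u).prodMk
      ((hasDerivAt_const u v).prodMk (hasDerivAt_const u w)))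
  exact (hF _).hasFDerivAt.comp_hasDerivAt u hc

lemma hasDerivAt_sec3 (hF : Differentiable ℝ F) (t u v w : ℝ) :
    HasDerivAt (fun s => F (t, u, s, w)) (fderiv ℝ F (t, u, v, w) (0, 0, 1, 0)) v := by
  have hc : HasDerivAt (fun s => ((t, u, s, w) : ℝ × ℝ × ℝ × ℝ)) ((0:ℝ), (0:ℝ), (1:ℝ), (0:ℝ)) v :=
    (hasDerivAt_const v t).prodMk ((hasDerivAt_const v u).prodMk
      ((hasDerivAt_id v).prodMk (hasDerivAt_const v w)))
  exact (hF _).hasFDerivAt.comp_hasDerivAt v hc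

lemma hasDerivAt_sec4 (hF : Differentiable ℝ F) (t u v w : ℝ) :
    HasDerivAt (fun s => F (t, u, v, s)) (fderiv ℝ F (t, u, v, w) (0, 0, 0, 1)) w := by
  have hc : HasDerivAt (fun s => ((t, u, v, s) : ℝ × ℝ × ℝ × ℝ)) ((0:ℝ), (0:ℝ), (0:ℝ), (1:ℝ)) w :=
    (hasDerivAt_const w t).prodMk ((hasDerivAt_const w u).prodMk
      ((hasDerivAt_const w v).prodMk (hasDerivAt_id w)))
  exact (hF _).hasFDerivAt.comp_hasDerivAt w hc

lemma lip_bound {s : Set (ℝ × ℝ × ℝ × ℝ)} (hs : Convex ℝ s) (hF : Differentiable ℝ F)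
    {K : ℝ} (hK : ∀ r ∈ s, ‖fderiv ℝ F r‖ ≤ K) {p q : ℝ × ℝ × ℝ × ℝ}
    (hp : p ∈ s) (hq : q ∈ s) : |F q - F p| ≤ K * ‖q - p‖ := by
  simpa [Real.norm_eq_abs] using
    hs.norm_image_sub_le_of_norm_fderiv_le (fun r _ => (hF r)) hK hp hq

lemma taylor_bound {s : Set (ℝ × ℝ × ℝ × ℝ)} (hs : Convex ℝ s) (hF : Differentiable ℝ F)
    {p q : ℝ × ℝ × ℝ × ℝ} (hp : p ∈ s) (hq : q ∈ s) {c : ℝ}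
    (hc : ∀ r ∈ s, ‖fderiv ℝ F r - fderiv ℝ F p‖ ≤ c) :
    |F q - F p - fderiv ℝ F p (q - p)| ≤ c * ‖q - p‖ := by
  have h := hs.norm_image_sub_le_of_norm_hasFDerivWithin_le
    (f := fun r => F r - fderiv ℝ F p r) (f' := fun r => fderiv ℝ F r - fderiv ℝ F p)
    (fun r _ => ((hF r).hasFDerivAt.sub (fderiv ℝ F p).hasFDerivAt).hasFDerivWithinAt)
    hc hp hq
  have e : F q - fderiv ℝ F p q - (F p - fderiv ℝ F p p) = F q - F p - fderiv ℝ F p (q - p) := by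
    rw [map_sub]; ring
  rw [e] at h
  simpa [Real.norm_eq_abs] using h

set_option maxHeartbeats 4000000 in
lemma first_variation_vanishes
    (a b γ : ℝ) (hab : a < b)
    (L : ℝ → ℝ → ℝ → ℝ → ℝ)
    (hL : ContDiff ℝ 1 (fun p : ℝ × ℝ × ℝ × ℝ => L p.1 p.2.1 p.2.2.1 p.2.2.2))
    (x z zc : ℝ → ℝ) (hx : ContDiff ℝ 2 x)
    (hz : ∀ t ∈ Set.Icc a b, HasDerivAt z (L t (x t) (deriv x t) (z t)) t)
    (hza : z a = γ)
    (hzc : Continuous zc) (hzce : ∀ t ∈ Set.Icc a b, zc t = z t)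
    (hext :
      (∀ y w : ℝ → ℝ, ContDiff ℝ 2 y → y a = x a →
        (∀ t ∈ Set.Icc a b, HasDerivAt w (L t (y t) (deriv y t) (w t)) t) →
        w a = γ → z b ≤ w b) ∨
      (∀ y w : ℝ → ℝ, ContDiff ℝ 2 y → y a = x a →
        (∀ t ∈ Set.Icc a b, HasDerivAt w (L t (y t) (deriv y t) (w t)) t) →
        w a = γ → w b ≤ z b))
    (η : ℝ → ℝ) (hη : ContDiff ℝ 2 η) (hηa : η a = 0) :
    ∫ t in a..b,
      Real.exp (-∫ θ in a..t,
        fderiv ℝ (fun p : ℝ × ℝ × ℝ × ℝ => L p.1 p.2.1 p.2.2.1 p.2.2.2)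
          (θ, x θ, deriv x θ, zc θ) (0, 0, 0, 1)) *
      (fderiv ℝ (fun p : ℝ × ℝ × ℝ × ℝ => L p.1 p.2.1 p.2.2.1 p.2.2.2)
          (t, x t, deriv x t, zc t) (0, 1, 0, 0) * η t +
       fderiv ℝ (fun p : ℝ × ℝ × ℝ × ℝ => L p.1 p.2.1 p.2.2.1 p.2.2.2)
          (t, x t, deriv x t, zc t) (0, 0, 1, 0) * deriv η t) = 0 := by
  classical
  set F : ℝ × ℝ × ℝ × ℝ → ℝ := fun p => L p.1 p.2.1 p.2.2.1 p.2.2.2 with hFdef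
  have hF : Differentiable ℝ F := hL.differentiable one_ne_zero
  have hDFc : Continuous (fderiv ℝ F) := hL.continuous_fderiv one_ne_zero
  have hxc : Continuous x := hx.continuous
  have hx' : Continuous (deriv x) := hx.continuous_deriv one_le_two
  have hηc : Continuous η := hη.continuous
  have hη' : Continuous (deriv η) := hη.continuous_deriv one_le_two
  set Pc : ℝ → ℝ × ℝ × ℝ × ℝ := fun t => (t, x t, deriv x t, zc t) with hPcdef
  have hPcc : Continuous Pc := continuous_id.prodMk (hxc.prodMk (hx'.prodMk hzc))
  set Lxc : ℝ → ℝ := fun t => fderiv ℝ F (Pc t) (0, 1, 0, 0) with hLxcdef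
  set Lvc : ℝ → ℝ := fun t => fderiv ℝ F (Pc t) (0, 0, 1, 0) with hLvcdef
  set Lzc : ℝ → ℝ := fun t => fderiv ℝ F (Pc t) (0, 0, 0, 1) with hLzcdef
  have hLxc_cont : Continuous Lxc := (hDFc.comp hPcc).clm_apply continuous_const
  have hLvc_cont : Continuous Lvc := (hDFc.comp hPcc).clm_apply continuous_const
  have hLzc_cont : Continuous Lzc := (hDFc.comp hPcc).clm_apply continuous_const
  set lamc : ℝ → ℝ := fun t => Real.exp (-∫ θ in a..t, Lzc θ) with hlamcdef
  set gc : ℝ → ℝ := fun t => Lxc t * η t + Lvc t * deriv η t with hgcdef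
  have hgc_cont : Continuous gc := (hLxc_cont.mul hηc).add (hLvc_cont.mul hη')
  -- derivative of lamc
  have hIder : ∀ t : ℝ, HasDerivAt (fun s => ∫ θ in a..s, Lzc θ) (Lzc t) t := by
    intro t
    exact intervalIntegral.integral_hasDerivAt_right
      (hLzc_cont.intervalIntegrable _ _)
      (hLzc_cont.stronglyMeasurable.stronglyMeasurableAtFilter)
      hLzc_cont.continuousAt
  have hlamd : ∀ t : ℝ, HasDerivAt lamc (-Lzc t * lamc t) t := by
    intro t
    have h := ((hIder t).neg).exp
    simpa [hlamcdef, mul_comm] using h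
  have hlamc_cont : Continuous lamc := by
    have : Continuous (fun s => ∫ θ in a..s, Lzc θ) :=
      continuous_iff_continuousAt.2 fun t => (hIder t).continuousAt
    exact Real.continuous_exp.comp this.neg
  have hlam_pos : ∀ t, 0 < lamc t := fun t => Real.exp_pos _
  set G : ℝ → ℝ := fun s => ∫ θ in a..s, lamc θ * gc θ with hGdef
  have hGd : ∀ t : ℝ, HasDerivAt G (lamc t * gc t) t := by
    intro t
    exact intervalIntegral.integral_hasDerivAt_right
      ((hlamc_cont.mul hgc_cont).intervalIntegrable _ _)
      ((hlamc_cont.mul hgc_cont).stronglyMeasurable.stronglyMeasurableAtFilter)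
      (hlamc_cont.mul hgc_cont).continuousAt
  show G b = 0
  set J : ℝ := G b with hJdef
  by_contra hJ
  -- compact bounds
  set X : Set ℝ := Icc (a-1) (b+1) with hXdef
  have hXcomp : IsCompact X := isCompact_Icc
  have haX : a ∈ X := ⟨by linarith, by linarith⟩
  have hsubX : Icc a b ⊆ X := Icc_subset_Icc (by linarith) (by linarith)
  obtain ⟨C, hC⟩ := hXcomp.exists_bound_of_continuousOn
    (((((hxc.abs.add hx'.abs).add hηc.abs).add hη'.abs).add hzc.abs)).continuousOn
  have hCb : ∀ t ∈ X, |x t| ≤ C ∧ |deriv x t| ≤ C ∧ |η t| ≤ C ∧ |deriv η t| ≤ C ∧ |zc t| ≤ C := by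
    intro t ht
    have h := hC t ht
    rw [Real.norm_eq_abs] at h
    have h' : |x t| + |deriv x t| + |η t| + |deriv η t| + |zc t| ≤ C := le_trans (le_abs_self _) h
    have a1 := abs_nonneg (x t); have a2 := abs_nonneg (deriv x t)
    have a3 := abs_nonneg (η t); have a4 := abs_nonneg (deriv η t)
    have a5 := abs_nonneg (zc t)
    exact ⟨by linarith, by linarith, by linarith, by linarith, by linarith⟩
  have hC0 : 0 ≤ C := le_trans (abs_nonneg (x a)) (hCb a haX).1
  set A : ℝ := 2*C + 2 with hAdef
  set B : Set (ℝ × ℝ × ℝ × ℝ) := X ×ˢ Icc (-A) A ×ˢ Icc (-A) A ×ˢ Icc (-A) A with hBdef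
  have hBconv : Convex ℝ B :=
    (convex_Icc _ _).prod ((convex_Icc _ _).prod ((convex_Icc _ _).prod (convex_Icc _ _)))
  have hBcomp : IsCompact B :=
    hXcomp.prod (isCompact_Icc.prod (isCompact_Icc.prod isCompact_Icc))
  have hmem : ∀ t ∈ X, ∀ ε : ℝ, |ε| ≤ 1 → ∀ u : ℝ, |u| ≤ 1 →
      (t, x t + ε * η t, deriv x t + ε * deriv η t, zc t + u) ∈ B := by
    intro t ht ε hε u hu
    obtain ⟨b1, b2, b3, b4, b5⟩ := hCb t ht
    have e1 : |x t + ε * η t| ≤ A := by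
      have : |x t + ε * η t| ≤ |x t| + |ε| * |η t| := by
        calc |x t + ε * η t| ≤ |x t| + |ε * η t| := abs_add_le _ _
          _ = |x t| + |ε| * |η t| := by rw [abs_mul]
      nlinarith [abs_nonneg (η t)]
    have e2 : |deriv x t + ε * deriv η t| ≤ A := by
      have : |deriv x t + ε * deriv η t| ≤ |deriv x t| + |ε| * |deriv η t| := by
        calc |deriv x t + ε * deriv η t| ≤ |deriv x t| + |ε * deriv η t| := abs_add_le _ _
          _ = |deriv x t| + |ε| * |deriv η t| := by rw [abs_mul]
      nlinarith [abs_nonneg (deriv η t)]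
    have e3 : |zc t + u| ≤ A := by
      have : |zc t + u| ≤ |zc t| + |u| := abs_add_le _ _
      nlinarith
    rw [abs_le] at e1 e2 e3
    exact ⟨ht, ⟨e1.1, e1.2⟩, ⟨e2.1, e2.2⟩, ⟨e3.1, e3.2⟩⟩
  have hmem0 : ∀ t ∈ X, Pc t ∈ B := by
    intro t ht
    have := hmem t ht 0 (by norm_num) 0 (by norm_num)
    simpa [hPcdef] using this
  obtain ⟨K₀, hK₀⟩ := hBcomp.exists_bound_of_continuousOn hDFc.continuousOn
  set Kf : ℝ := max K₀ 1 with hKfdef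
  have hKf1 : (1:ℝ) ≤ Kf := le_max_right _ _
  have hKfpos : (0:ℝ) < Kf := by linarith
  have hKfb : ∀ p ∈ B, ‖fderiv ℝ F p‖ ≤ Kf := fun p hp => le_trans (hK₀ p hp) (le_max_left _ _)
  obtain ⟨CL, hCL⟩ := hBcomp.exists_bound_of_continuousOn hF.continuous.continuousOn
  have hCL0 : 0 ≤ CL := le_trans (norm_nonneg _) (hCL _ (hmem0 a haX))
  set CΔ : ℝ := C * (Real.exp (Kf * (b - a)) - 1) with hCΔdef
  have hCΔ0 : 0 ≤ CΔ := by
    have h1 : (1:ℝ) ≤ Real.exp (Kf * (b - a)) := by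
      rw [← Real.exp_zero]
      apply Real.exp_le_exp.2
      nlinarith
    nlinarith
  -- lam bound on [a,b]
  obtain ⟨Λ, hΛ⟩ := (isCompact_Icc (a := a) (b := b)).exists_bound_of_continuousOn
    hlamc_cont.continuousOn
  have hΛ0 : 0 ≤ Λ := le_trans (norm_nonneg _) (hΛ a ⟨le_refl a, le_of_lt hab⟩)
  set c' : ℝ := |J| / (2 * ((b - a) * Λ * (C + CΔ) + 1)) with hc'def
  have hJpos : 0 < |J| := abs_pos.2 hJ
  have hDden : 0 < (b - a) * Λ * (C + CΔ) + 1 := by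
    have h1 : (0:ℝ) ≤ b - a := by linarith
    have h2 : (0:ℝ) ≤ C + CΔ := by linarith
    have := mul_nonneg (mul_nonneg h1 hΛ0) h2
    linarith
  have hc'pos : 0 < c' := by
    apply div_pos hJpos
    linarith
  -- uniform continuity of the derivative on B
  have hUC := hBcomp.uniformContinuousOn_of_continuous hDFc.continuousOn
  rw [Metric.uniformContinuousOn_iff] at hUC
  obtain ⟨δc, hδcpos, hδcP⟩ := hUC c' hc'pos
  set ε₂ : ℝ := min (min 1 (1 / (CΔ + 1))) (δc / (2 * (C + CΔ + 1))) with hε₂def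
  have hε₂pos : 0 < ε₂ := by
    apply lt_min (lt_min one_pos (by positivity))
    positivity
  have hε₂le1 : ε₂ ≤ 1 := le_trans (min_le_left _ _) (min_le_left _ _)
  -- the main construction
  have main : ∀ ε : ℝ, |ε| ≤ ε₂ →
      ∃ w : ℝ → ℝ,
        (∀ t ∈ Icc a b,
          HasDerivAt w (L t (x t + ε * η t)
            (deriv (fun s => x s + ε * η s) t) (w t)) t) ∧ w a = γ ∧
        |lamc b * (w b - z b) - ε * J| ≤ (|J| / 2) * |ε| := by
    intro ε hε
    have hε1 : |ε| ≤ 1 := le_trans hε hε₂le1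
    have hεC : |ε| ≤ 1 / (CΔ + 1) :=
      le_trans hε (le_trans (min_le_left _ _) (min_le_right _ _))
    have hεδ : |ε| ≤ δc / (2 * (C + CΔ + 1)) := le_trans hε (min_le_right _ _)
    set v : ℝ → ℝ → ℝ := fun t w' =>
      F (t, x t + ε * η t, deriv x t + ε * deriv η t, zc t + cl (w' - zc t)) with hvdef
    set R : ℝ := (CL + 1) * (b - a + 2) with hRdef
    have hR0 : 0 ≤ R := by nlinarith
    have hPL : IsPicardLindelof v (tmin := a-1) (tmax := b+1)
        ⟨a, by constructor <;> linarith⟩ γ R.toNNReal 0 CL.toNNReal Kf.toNNReal :=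
      { lipschitzOnWith := by
          intro t ht
          rw [lipschitzOnWith_iff_dist_le_mul]
          intro w₁ _ w₂ _
          rw [Real.dist_eq, Real.dist_eq, Real.coe_toNNReal _ hKfpos.le]
          have hp₁ : (t, x t + ε * η t, deriv x t + ε * deriv η t, zc t + cl (w₁ - zc t)) ∈ B :=
            hmem t ht ε hε1 _ (abs_cl_le _)
          have hp₂ : (t, x t + ε * η t, deriv x t + ε * deriv η t, zc t + cl (w₂ - zc t)) ∈ B :=
            hmem t ht ε hε1 _ (abs_cl_le _)
          have h := lip_bound hBconv hF hKfb hp₂ hp₁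
          have hd : (t, x t + ε * η t, deriv x t + ε * deriv η t, zc t + cl (w₁ - zc t)) -
              (t, x t + ε * η t, deriv x t + ε * deriv η t, zc t + cl (w₂ - zc t)) =
              ((0:ℝ), (0:ℝ), (0:ℝ), cl (w₁ - zc t) - cl (w₂ - zc t)) := by
            simp [Prod.ext_iff]
          rw [hd, norm4] at h
          have hrest : max |(0:ℝ)| (max |(0:ℝ)| (max |(0:ℝ)|
              |cl (w₁ - zc t) - cl (w₂ - zc t)|)) = |cl (w₁ - zc t) - cl (w₂ - zc t)| := by
            simp [abs_nonneg, max_eq_right]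
          rw [hrest] at h
          refine le_trans h ?_
          have hc := cl_lip (w₁ - zc t) (w₂ - zc t)
          have h2 : (w₁ - zc t) - (w₂ - zc t) = w₁ - w₂ := by ring
          rw [h2] at hc
          exact mul_le_mul_of_nonneg_left hc hKfpos.le
        continuousOn := by
          intro w' _
          apply Continuous.continuousOn
          exact hF.continuous.comp (continuous_id.prodMk
            ((hxc.add (continuous_const.mul hηc)).prodMk
              ((hx'.add (continuous_const.mul hη')).prodMk
                (hzc.add (cl_cont.comp (continuous_const.sub hzc))))))
        norm_le := by
          intro t ht w' _
          exact (hCL _ (hmem t ht ε hε1 _ (abs_cl_le _))).trans (Real.le_coe_toNNReal _)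
        mul_max_le := by
          have e1 := Real.coe_toNNReal _ hCL0
          have e2 := Real.coe_toNNReal _ hR0
          simp only [e1, e2, NNReal.coe_zero, sub_zero]
          rw [max_eq_left (by linarith : a - (a-1) ≤ (b+1) - a)]
          nlinarith }
    obtain ⟨w, hwa0, hwd⟩ := hPL.exists_eq_forall_mem_Icc_hasDerivWithinAt₀
    have hwa : w a = γ := hwa0
    have hwAt : ∀ t ∈ Icc a b, HasDerivAt w (v t (w t)) t := by
      intro t ht
      exact (hwd t (hsubX ht)).hasDerivAt (Icc_mem_nhds (by linarith [ht.1]) (by linarith [ht.2]))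
    have hΔAt : ∀ t ∈ Icc a b, HasDerivAt (fun s => w s - z s)
        (v t (w t) - L t (x t) (deriv x t) (z t)) t := fun t ht =>
      (hwAt t ht).sub (hz t ht)
    -- Gronwall bound on the difference
    have hbd : ∀ t ∈ Icc a b, |v t (w t) - L t (x t) (deriv x t) (z t)| ≤
        Kf * |w t - z t| + Kf * C * |ε| := by
      intro t ht
      have hzt := hzce t ht
      have htX := hsubX ht
      have hq : (t, x t + ε * η t, deriv x t + ε * deriv η t, zc t + cl (w t - zc t)) ∈ B :=
        hmem t htX ε hε1 _ (abs_cl_le _)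
      have hp : Pc t ∈ B := hmem0 t htX
      have h := lip_bound hBconv hF hKfb hp hq
      have hLp : L t (x t) (deriv x t) (z t) = F (Pc t) := by
        rw [hPcdef]
        show L t (x t) (deriv x t) (z t) = L t (x t) (deriv x t) (zc t)
        rw [hzt]
      have hd : (t, x t + ε * η t, deriv x t + ε * deriv η t, zc t + cl (w t - zc t)) - Pc t =
          ((0:ℝ), ε * η t, ε * deriv η t, cl (w t - zc t)) := by
        rw [hPcdef]
        simp [Prod.ext_iff]
      rw [hd, norm4] at h
      have hb1 : |ε * η t| ≤ C * |ε| := by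
        rw [abs_mul]
        have := (hCb t htX).2.2.1
        nlinarith [abs_nonneg ε]
      have hb2 : |ε * deriv η t| ≤ C * |ε| := by
        rw [abs_mul]
        have := (hCb t htX).2.2.2.1
        nlinarith [abs_nonneg ε]
      have hb3 : |cl (w t - zc t)| ≤ |w t - z t| := by
        rw [hzt]
        exact abs_cl_le_abs _
      have hmax : max |(0:ℝ)| (max |ε * η t| (max |ε * deriv η t| |cl (w t - zc t)|)) ≤
          |w t - z t| + C * |ε| := by
        have h0 : |(0:ℝ)| ≤ |w t - z t| + C * |ε| := by
          simp only [abs_zero]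
          have := abs_nonneg (w t - z t)
          nlinarith [abs_nonneg ε]
        have h1 : |ε * η t| ≤ |w t - z t| + C * |ε| := by
          have := abs_nonneg (w t - z t); linarith
        have h2 : |ε * deriv η t| ≤ |w t - z t| + C * |ε| := by
          have := abs_nonneg (w t - z t); linarith
        have h3 : |cl (w t - zc t)| ≤ |w t - z t| + C * |ε| := by
          have h4 : 0 ≤ C * |ε| := by positivity
          linarith
        exact max_le h0 (max_le h1 (max_le h2 h3))
      calc |v t (w t) - L t (x t) (deriv x t) (z t)|
          = |F (t, x t + ε * η t, deriv x t + ε * deriv η t, zc t + cl (w t - zc t)) - F (Pc t)| := by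
            rw [hLp]
        _ ≤ Kf * (|w t - z t| + C * |ε|) :=
            le_trans h (mul_le_mul_of_nonneg_left hmax hKfpos.le)
        _ = Kf * |w t - z t| + Kf * C * |ε| := by ring
    have hgron := norm_le_gronwallBound_of_norm_deriv_right_le
      (f := fun s => w s - z s)
      (f' := fun s => v s (w s) - L s (x s) (deriv x s) (z s))
      (δ := 0) (K := Kf) (ε := Kf * C * |ε|) (a := a) (b := b)
      (fun t ht => ((hΔAt t ht).continuousAt).continuousWithinAt)
      (fun t ht => (hΔAt t (Ico_subset_Icc_self ht)).hasDerivWithinAt)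
      (by show ‖w a - z a‖ ≤ 0; rw [hwa, hza]; simp)
      (fun t ht => by
        rw [Real.norm_eq_abs, Real.norm_eq_abs]
        exact hbd t (Ico_subset_Icc_self ht))
    have hΔle : ∀ t ∈ Icc a b, |w t - z t| ≤ CΔ * |ε| := by
      intro t ht
      have h := hgron t ht
      rw [Real.norm_eq_abs] at h
      refine le_trans h ?_
      rw [gronwallBound_of_K_ne_0 (ne_of_gt hKfpos)]
      have hmono : Real.exp (Kf * (t - a)) - 1 ≤ Real.exp (Kf * (b - a)) - 1 := by
        have h2 : Kf * (t - a) ≤ Kf * (b - a) := by nlinarith [ht.2]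
        have := Real.exp_le_exp.2 h2
        linarith
      have hnn : 0 ≤ Real.exp (Kf * (t - a)) - 1 := by
        have : (1:ℝ) ≤ Real.exp (Kf * (t - a)) := by
          rw [← Real.exp_zero]
          exact Real.exp_le_exp.2 (by nlinarith [ht.1])
        linarith
      have he : Kf * C * |ε| / Kf = C * |ε| := by
        field_simp
      calc 0 * Real.exp (Kf * (t - a)) + Kf * C * |ε| / Kf * (Real.exp (Kf * (t - a)) - 1)
          = C * |ε| * (Real.exp (Kf * (t - a)) - 1) := by rw [he]; ring
        _ ≤ C * |ε| * (Real.exp (Kf * (b - a)) - 1) := by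
            have : (0:ℝ) ≤ C * |ε| := by positivity
            nlinarith
        _ = CΔ * |ε| := by rw [hCΔdef]; ring
    have hΔ1 : ∀ t ∈ Icc a b, |w t - z t| ≤ 1 := by
      intro t ht
      have h := hΔle t ht
      have h2 : CΔ * |ε| ≤ CΔ * (1 / (CΔ + 1)) := mul_le_mul_of_nonneg_left hεC hCΔ0
      have h3 : CΔ * (1 / (CΔ + 1)) ≤ 1 := by
        rw [mul_one_div]
        exact div_le_one_of_le₀ (by linarith) (by linarith)
      linarith
    have hveq : ∀ t ∈ Icc a b, v t (w t) =
        L t (x t + ε * η t) (deriv x t + ε * deriv η t) (w t) := by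
      intro t ht
      have hzt := hzce t ht
      show F (t, x t + ε * η t, deriv x t + ε * deriv η t, zc t + cl (w t - zc t)) = _
      rw [hzt, cl_eq (hΔ1 t ht)]
      show L t (x t + ε * η t) (deriv x t + ε * deriv η t) (z t + (w t - z t)) = _
      rw [show z t + (w t - z t) = w t by ring]
    have hyderiv : ∀ s : ℝ, deriv (fun s => x s + ε * η s) s = deriv x s + ε * deriv η s := by
      intro s
      exact (((hx.differentiable two_ne_zero s).hasDerivAt).add
        (((hη.differentiable two_ne_zero s).hasDerivAt).const_mul ε)).deriv
    refine ⟨w, ?_, hwa, ?_⟩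
    · intro t ht
      rw [hyderiv t, ← hveq t ht]
      exact hwAt t ht
    -- refined first-order estimate
    · have hkey : ∀ t ∈ Icc a b,
          |(v t (w t) - L t (x t) (deriv x t) (z t)) - Lzc t * (w t - z t) - ε * gc t| ≤
            c' * ((C + CΔ) * |ε|) := by
        intro t ht
        have hzt := hzce t ht
        have htX := hsubX ht
        have hp : Pc t ∈ B := hmem0 t htX
        have hq0 : (t, x t + ε * η t, deriv x t + ε * deriv η t, zc t + (w t - zc t)) ∈ B := by
          refine hmem t htX ε hε1 _ ?_
          rw [hzt]
          exact hΔ1 t ht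
        have hq : (t, x t + ε * η t, deriv x t + ε * deriv η t, w t) ∈ B := by
          have he : zc t + (w t - zc t) = w t := by ring
          rwa [he] at hq0
        have hdq : (t, x t + ε * η t, deriv x t + ε * deriv η t, w t) - Pc t =
            ((0:ℝ), ε * η t, ε * deriv η t, w t - z t) := by
          rw [hPcdef]
          simp [Prod.ext_iff, hzt]
        have hb1 : |ε * η t| ≤ C * |ε| := by
          rw [abs_mul]
          have := (hCb t htX).2.2.1
          nlinarith [abs_nonneg ε]
        have hb2 : |ε * deriv η t| ≤ C * |ε| := by
          rw [abs_mul]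
          have := (hCb t htX).2.2.2.1
          nlinarith [abs_nonneg ε]
        have hb3 : |w t - z t| ≤ CΔ * |ε| := hΔle t ht
        have hnq : ‖(t, x t + ε * η t, deriv x t + ε * deriv η t, w t) - Pc t‖ ≤
            (C + CΔ) * |ε| := by
          rw [hdq, norm4]
          have h0 : |(0:ℝ)| ≤ (C + CΔ) * |ε| := by
            simp only [abs_zero]; positivity
          have hcc : C * |ε| ≤ (C + CΔ) * |ε| := by nlinarith [abs_nonneg ε]
          have hdd : CΔ * |ε| ≤ (C + CΔ) * |ε| := by nlinarith [abs_nonneg ε]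
          exact max_le h0 (max_le (le_trans hb1 hcc) (max_le (le_trans hb2 hcc)
            (le_trans hb3 hdd)))
        have hsmall : (C + CΔ) * |ε| ≤ δc / 2 := by
          have hD : (0:ℝ) < 2 * (C + CΔ + 1) := by linarith
          have h5 : |ε| * (2 * (C + CΔ + 1)) ≤ δc := by
            rw [← le_div_iff₀ hD]
            exact hεδ
          nlinarith [abs_nonneg ε]
        -- Taylor estimate on B ∩ closedBall
        set s' : Set (ℝ × ℝ × ℝ × ℝ) := B ∩ Metric.closedBall (Pc t) (δc / 2) with hs'def
        have hs'conv : Convex ℝ s' := hBconv.inter (convex_closedBall _ _)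
        have hps' : Pc t ∈ s' := ⟨hp, Metric.mem_closedBall_self (by linarith)⟩
        have hqs' : (t, x t + ε * η t, deriv x t + ε * deriv η t, w t) ∈ s' := by
          refine ⟨hq, ?_⟩
          rw [Metric.mem_closedBall, dist_eq_norm]
          exact le_trans hnq hsmall
        have hcb : ∀ r ∈ s', ‖fderiv ℝ F r - fderiv ℝ F (Pc t)‖ ≤ c' := by
          intro r hr
          have hlt := hδcP r hr.1 (Pc t) hp (lt_of_le_of_lt
            (Metric.mem_closedBall.1 hr.2) (by linarith))
          rw [dist_eq_norm] at hlt
          exact hlt.le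
        have htay := taylor_bound hs'conv hF hps' hqs' hcb
        have hexpr : (v t (w t) - L t (x t) (deriv x t) (z t)) - Lzc t * (w t - z t) - ε * gc t =
            F (t, x t + ε * η t, deriv x t + ε * deriv η t, w t) - F (Pc t) -
              fderiv ℝ F (Pc t)
                ((t, x t + ε * η t, deriv x t + ε * deriv η t, w t) - Pc t) := by
          rw [hveq t ht, hdq, clm4_apply]
          have hLp : L t (x t) (deriv x t) (z t) = F (Pc t) := by
            rw [hPcdef]
            show L t (x t) (deriv x t) (z t) = L t (x t) (deriv x t) (zc t)
            rw [hzt]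
          have hvF : L t (x t + ε * η t) (deriv x t + ε * deriv η t) (w t) =
              F (t, x t + ε * η t, deriv x t + ε * deriv η t, w t) := rfl
          rw [hLp, hvF, hgcdef, hLxcdef, hLvcdef, hLzcdef]
          ring
        rw [hexpr]
        refine le_trans htay ?_
        exact mul_le_mul_of_nonneg_left hnq hc'pos.le
      -- mean value estimate for m
      have hmAt : ∀ t ∈ Icc a b, HasDerivAt (fun s => lamc s * (w s - z s) - ε * G s)
          (lamc t * ((v t (w t) - L t (x t) (deriv x t) (z t)) - Lzc t * (w t - z t) -
            ε * gc t)) t := by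
        intro t ht
        have h1 := (hlamd t).mul (hΔAt t ht)
        have h2 := (hGd t).const_mul ε
        have h3 := h1.sub h2
        exact h3.congr_deriv (by ring)
      have hmv := Convex.norm_image_sub_le_of_norm_hasDerivWithin_le
        (f := fun s => lamc s * (w s - z s) - ε * G s)
        (f' := fun t => lamc t * ((v t (w t) - L t (x t) (deriv x t) (z t)) -
          Lzc t * (w t - z t) - ε * gc t))
        (C := Λ * (c' * ((C + CΔ) * |ε|)))
        (fun t ht => (hmAt t ht).hasDerivWithinAt)
        (fun t ht => by
          rw [Real.norm_eq_abs, abs_mul]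
          have hl : |lamc t| ≤ Λ := by rw [← Real.norm_eq_abs]; exact hΛ t ht
          exact mul_le_mul hl (hkey t ht) (abs_nonneg _) hΛ0)
        (convex_Icc a b) ⟨le_refl a, hab.le⟩ ⟨hab.le, le_refl b⟩
      have hma : lamc a * (w a - z a) - ε * G a = 0 := by
        rw [hwa, hza]
        show lamc a * (γ - γ) - ε * (∫ θ in a..a, lamc θ * gc θ) = 0
        rw [intervalIntegral.integral_same]
        ring
      have hmb : ‖lamc b * (w b - z b) - ε * J‖ ≤ Λ * (c' * ((C + CΔ) * |ε|)) * ‖b - a‖ := by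
        have h4 : (fun s => lamc s * (w s - z s) - ε * G s) b -
            (fun s => lamc s * (w s - z s) - ε * G s) a = lamc b * (w b - z b) - ε * J := by
          simp only []
          rw [hma, sub_zero, hJdef]
        rw [← h4]
        exact hmv
      rw [Real.norm_eq_abs, Real.norm_eq_abs, abs_of_pos (by linarith : (0:ℝ) < b - a)] at hmb
      refine le_trans hmb ?_
      have hD0 : 0 ≤ (b - a) * Λ * (C + CΔ) :=
        mul_nonneg (mul_nonneg (by linarith) hΛ0) (by linarith)
      have hcd : c' * ((b - a) * Λ * (C + CΔ)) ≤ |J| / 2 := by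
        rw [hc'def, div_mul_eq_mul_div, div_le_div_iff₀ (by linarith) two_pos]
        nlinarith [hJpos.le, hD0]
      calc Λ * (c' * ((C + CΔ) * |ε|)) * (b - a)
          = (c' * ((b - a) * Λ * (C + CΔ))) * |ε| := by ring
        _ ≤ (|J| / 2) * |ε| := mul_le_mul_of_nonneg_right hcd (abs_nonneg ε)

  -- derive the contradiction
  have hy2 : ∀ ε : ℝ, ContDiff ℝ 2 (fun s => x s + ε * η s) := fun ε =>
    hx.add (contDiff_const.mul hη)
  have hya : ∀ ε : ℝ, (fun s => x s + ε * η s) a = x a := by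
    intro ε; simp [hηa]
  rcases hext with hmin | hmax
  · -- minimizer: find competitor with w b < z b
    set ε : ℝ := if 0 < J then -ε₂ else ε₂ with hεdef
    have hεabs : |ε| = ε₂ := by
      rcases le_or_gt J 0 with h | h
      · simp [hεdef, not_lt.2 h, abs_of_pos hε₂pos]
      · simp [hεdef, h, abs_of_pos hε₂pos]
    have hεJ : ε * J = -(ε₂ * |J|) := by
      rcases lt_or_ge 0 J with h | h
      · rw [hεdef, if_pos h, abs_of_pos h]; ring
      · rw [hεdef, if_neg (not_lt.2 h), abs_of_nonpos h]; ring
    obtain ⟨w, hode, hwa, hest⟩ := main ε (by rw [hεabs])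
    have hle := hmin (fun s => x s + ε * η s) w (hy2 ε) (hya ε) hode hwa
    -- lamc b * (w b - z b) < 0
    have h1 : lamc b * (w b - z b) ≤ ε * J + (|J| / 2) * |ε| := by
      have := (abs_le.1 hest).2; linarith
    rw [hεJ, hεabs] at h1
    have h2 : lamc b * (w b - z b) < 0 := by nlinarith
    have h3 : 0 ≤ lamc b * (w b - z b) := by
      have := hlam_pos b
      nlinarith
    linarith
  · -- maximizer: find competitor with w b > z b
    set ε : ℝ := if 0 < J then ε₂ else -ε₂ with hεdef
    have hεabs : |ε| = ε₂ := by
      rcases le_or_gt J 0 with h | h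
      · simp [hεdef, not_lt.2 h, abs_of_pos hε₂pos]
      · simp [hεdef, h, abs_of_pos hε₂pos]
    have hεJ : ε * J = ε₂ * |J| := by
      rcases lt_or_ge 0 J with h | h
      · rw [hεdef, if_pos h, abs_of_pos h]
      · rw [hεdef, if_neg (not_lt.2 h), abs_of_nonpos h]; ring
    obtain ⟨w, hode, hwa, hest⟩ := main ε (by rw [hεabs])
    have hle := hmax (fun s => x s + ε * η s) w (hy2 ε) (hya ε) hode hwa
    have h1 : ε * J - (|J| / 2) * |ε| ≤ lamc b * (w b - z b) := by
      have := (abs_le.1 hest).1; linarith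
    rw [hεJ, hεabs] at h1
    have h2 : 0 < lamc b * (w b - z b) := by nlinarith
    have h3 : lamc b * (w b - z b) ≤ 0 := by
      have := hlam_pos b
      nlinarith
    linarith

end HerglotzProofK

open HerglotzProofK Set Real MeasureTheory intervalIntegral

set_option maxHeartbeats 4000000 in
/-- Natural boundary conditions for the Herglotz problem
(first order, free right endpoint). -/
theorem herglotz_natural_boundary_first_order
    (a b γ α : ℝ) (hab : a < b)
    (L : ℝ → ℝ → ℝ → ℝ → ℝ)
    (hL : ContDiff ℝ 1 (fun p : ℝ × ℝ × ℝ × ℝ => L p.1 p.2.1 p.2.2.1 p.2.2.2))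
    (x z : ℝ → ℝ) (hx : ContDiff ℝ 2 x) (hxa : x a = α)
    (hz : ∀ t ∈ Set.Icc a b, HasDerivAt z (L t (x t) (deriv x t) (z t)) t)
    (hza : z a = γ)
    (Lx Lv Lz : ℝ → ℝ)
    (hLx : ∀ t, Lx t = deriv (fun u => L t u (deriv x t) (z t)) (x t))
    (hLv : ∀ t, Lv t = deriv (fun u => L t (x t) u (z t)) (deriv x t))
    (hLz : ∀ t, Lz t = deriv (fun u => L t (x t) (deriv x t) u) (z t))
    (hLv1 : ContDiff ℝ 1 Lv) (hLz1 : ContDiff ℝ 1 Lz)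
    (lam : ℝ → ℝ) (hlam : ∀ t, lam t = Real.exp (-∫ θ in a..t, Lz θ))
    -- x extremizes z(b) among trajectories with x(a) = α fixed, x(b) free
    (hext :
      (∀ y w : ℝ → ℝ, ContDiff ℝ 2 y → y a = α →
        (∀ t ∈ Set.Icc a b, HasDerivAt w (L t (y t) (deriv y t) (w t)) t) →
        w a = γ → z b ≤ w b) ∨
      (∀ y w : ℝ → ℝ, ContDiff ℝ 2 y → y a = α →
        (∀ t ∈ Set.Icc a b, HasDerivAt w (L t (y t) (deriv y t) (w t)) t) →
        w a = γ → w b ≤ z b)) :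
    (∀ t ∈ Set.Icc a b, Lx t + Lz t * Lv t - deriv Lv t = 0) ∧
    lam b * Lv b = 0 ∧ Lv b = 0 := by
  classical
  set F : ℝ × ℝ × ℝ × ℝ → ℝ := fun p => L p.1 p.2.1 p.2.2.1 p.2.2.2 with hFdef
  have hF : Differentiable ℝ F := hL.differentiable one_ne_zero
  have hDFc : Continuous (fderiv ℝ F) := hL.continuous_fderiv one_ne_zero
  have hxc : Continuous x := hx.continuous
  have hx' : Continuous (deriv x) := hx.continuous_deriv one_le_two
  have hzcont : ContinuousOn z (Icc a b) := fun t ht =>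
    ((hz t ht).continuousAt).continuousWithinAt
  set zc : ℝ → ℝ := fun t => z (max a (min b t)) with hzcdef
  have hproj : ∀ t : ℝ, max a (min b t) ∈ Icc a b := by
    intro t
    exact ⟨le_max_left _ _, max_le hab.le (min_le_left _ _)⟩
  have hzc : Continuous zc := hzcont.comp_continuous
    (continuous_const.max (continuous_const.min continuous_id)) hproj
  have hzce : ∀ t ∈ Icc a b, zc t = z t := by
    intro t ht
    show z (max a (min b t)) = z t
    rw [min_eq_right ht.2, max_eq_right ht.1]
  -- identification of the partial derivatives
  have hLxe : ∀ t, Lx t = fderiv ℝ F (t, x t, deriv x t, z t) (0, 1, 0, 0) := fun t => by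
    rw [hLx t]
    exact (hasDerivAt_sec2 hF t (x t) (deriv x t) (z t)).deriv
  have hLve : ∀ t, Lv t = fderiv ℝ F (t, x t, deriv x t, z t) (0, 0, 1, 0) := fun t => by
    rw [hLv t]
    exact (hasDerivAt_sec3 hF t (x t) (deriv x t) (z t)).deriv
  have hLze : ∀ t, Lz t = fderiv ℝ F (t, x t, deriv x t, z t) (0, 0, 0, 1) := fun t => by
    rw [hLz t]
    exact (hasDerivAt_sec4 hF t (x t) (deriv x t) (z t)).deriv
  have hLzcont : Continuous Lz := hLz1.continuous
  have hLvcont : Continuous Lv := hLv1.continuous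
  have hLv'cont : Continuous (deriv Lv) := hLv1.continuous_deriv le_rfl
  have hηcont : ∀ η : ℝ → ℝ, ContDiff ℝ 2 η → Continuous η ∧ Continuous (deriv η) :=
    fun η hη => ⟨hη.continuous, hη.continuous_deriv one_le_two⟩
  -- lam is differentiable
  have hlamf : lam = fun t => Real.exp (-∫ θ in a..t, Lz θ) := funext hlam
  have hIder : ∀ t : ℝ, HasDerivAt (fun s => ∫ θ in a..s, Lz θ) (Lz t) t := fun t =>
    intervalIntegral.integral_hasDerivAt_right (hLzcont.intervalIntegrable _ _)
      (hLzcont.stronglyMeasurable.stronglyMeasurableAtFilter) hLzcont.continuousAt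
  have hlamd : ∀ t : ℝ, HasDerivAt lam (-Lz t * lam t) t := by
    rw [hlamf]
    intro t
    have h := ((hIder t).neg).exp
    simpa [mul_comm] using h
  have hlamcont : Continuous lam := by
    rw [hlamf]
    exact Real.continuous_exp.comp
      (continuous_iff_continuousAt.2 fun t => (hIder t).continuousAt).neg
  have hlampos : ∀ t, 0 < lam t := fun t => by rw [hlam t]; exact Real.exp_pos _
  -- continuity of Lx on [a, b]
  have hPcc : Continuous (fun t => ((t, x t, deriv x t, zc t) : ℝ × ℝ × ℝ × ℝ)) :=
    continuous_id.prodMk (hxc.prodMk (hx'.prodMk hzc))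
  have hLxcont : ContinuousOn Lx (Icc a b) := by
    have h1 : Continuous (fun t => fderiv ℝ F (t, x t, deriv x t, zc t) (0, 1, 0, 0)) :=
      (hDFc.comp hPcc).clm_apply continuous_const
    apply h1.continuousOn.congr
    intro t ht
    show Lx t = fderiv ℝ F (t, x t, deriv x t, zc t) (0, 1, 0, 0)
    rw [hLxe t, hzce t ht]
  set E : ℝ → ℝ := fun t => Lx t + Lz t * Lv t - deriv Lv t with hEdef
  have hEcont : ContinuousOn E (Icc a b) :=
    ((hLxcont.add ((hLzcont.mul hLvcont).continuousOn)).sub hLv'cont.continuousOn)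
  clear_value E
  -- the first variation vanishes
  have hVan : ∀ η : ℝ → ℝ, ContDiff ℝ 2 η → η a = 0 →
      (∫ t in a..b, lam t * (Lx t * η t + Lv t * deriv η t)) = 0 := by
    intro η hη hηa
    have hext' :
      (∀ y w : ℝ → ℝ, ContDiff ℝ 2 y → y a = x a →
        (∀ t ∈ Set.Icc a b, HasDerivAt w (L t (y t) (deriv y t) (w t)) t) →
        w a = γ → z b ≤ w b) ∨
      (∀ y w : ℝ → ℝ, ContDiff ℝ 2 y → y a = x a →
        (∀ t ∈ Set.Icc a b, HasDerivAt w (L t (y t) (deriv y t) (w t)) t) →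
        w a = γ → w b ≤ z b) := by
      rw [hxa]
      exact hext
    have hkey := first_variation_vanishes a b γ hab L hL x z zc hx hz hza hzc hzce hext' η hη hηa
    rw [← hkey]
    apply intervalIntegral.integral_congr
    intro t ht
    rw [uIcc_of_le hab.le] at ht
    have h1 : (∫ θ in a..t, Lz θ) =
        ∫ θ in a..t, fderiv ℝ (fun p : ℝ × ℝ × ℝ × ℝ => L p.1 p.2.1 p.2.2.1 p.2.2.2)
          (θ, x θ, deriv x θ, zc θ) (0, 0, 0, 1) := by
      apply intervalIntegral.integral_congr
      intro θ hθ
      rw [uIcc_of_le ht.1] at hθ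
      have hθI : θ ∈ Icc a b := ⟨hθ.1, le_trans hθ.2 ht.2⟩
      show Lz θ = fderiv ℝ F (θ, x θ, deriv x θ, zc θ) (0, 0, 0, 1)
      rw [hLze θ, hzce θ hθI]
    show lam t * (Lx t * η t + Lv t * deriv η t) =
        Real.exp (-∫ θ in a..t, fderiv ℝ F (θ, x θ, deriv x θ, zc θ) (0, 0, 0, 1)) *
        (fderiv ℝ F (t, x t, deriv x t, zc t) (0, 1, 0, 0) * η t +
         fderiv ℝ F (t, x t, deriv x t, zc t) (0, 0, 1, 0) * deriv η t)
    rw [hlam t, h1, hLxe t, hLve t, ← hzce t ht]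
  -- integration by parts
  have hParts : ∀ η : ℝ → ℝ, ContDiff ℝ 2 η → η a = 0 →
      (∫ t in a..b, lam t * η t * E t) = -(lam b * Lv b * η b) := by
    intro η hη hηa
    obtain ⟨hηc, hη'⟩ := hηcont η hη
    have hLvd : ∀ t : ℝ, HasDerivAt Lv (deriv Lv t) t := fun t =>
      (hLv1.differentiable one_ne_zero t).hasDerivAt
    have hηd : ∀ t : ℝ, HasDerivAt η (deriv η t) t := fun t =>
      (hη.differentiable two_ne_zero t).hasDerivAt
    have hPrd : ∀ t : ℝ, HasDerivAt (fun s => lam s * Lv s * η s)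
        (((-Lz t * lam t) * Lv t + lam t * deriv Lv t) * η t +
          lam t * Lv t * deriv η t) t := fun t =>
      (((hlamd t).mul (hLvd t)).mul (hηd t))
    have hPDcont : Continuous (fun t => ((-Lz t * lam t) * Lv t + lam t * deriv Lv t) * η t +
        lam t * Lv t * deriv η t) :=
      ((((hLzcont.neg.mul hlamcont).mul hLvcont).add (hlamcont.mul hLv'cont)).mul hηc).add
        (((hlamcont.mul hLvcont)).mul hη')
    have hFTC : (∫ t in a..b, (((-Lz t * lam t) * Lv t + lam t * deriv Lv t) * η t +
        lam t * Lv t * deriv η t)) = lam b * Lv b * η b - lam a * Lv a * η a :=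
      intervalIntegral.integral_eq_sub_of_hasDerivAt (fun t _ => hPrd t)
        (hPDcont.intervalIntegrable _ _)
    have hint1 : IntervalIntegrable (fun t => ((-Lz t * lam t) * Lv t + lam t * deriv Lv t) * η t +
        lam t * Lv t * deriv η t) volume a b := hPDcont.intervalIntegrable _ _
    have hint2 : IntervalIntegrable (fun t => lam t * η t * E t) volume a b := by
      apply ContinuousOn.intervalIntegrable
      rw [uIcc_of_le hab.le]
      exact ((hlamcont.continuousOn.mul hηc.continuousOn).mul hEcont)
    have hsplit : (∫ t in a..b, lam t * (Lx t * η t + Lv t * deriv η t)) =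
        (∫ t in a..b, (((-Lz t * lam t) * Lv t + lam t * deriv Lv t) * η t +
          lam t * Lv t * deriv η t)) + ∫ t in a..b, lam t * η t * E t := by
      rw [← intervalIntegral.integral_add hint1 hint2]
      apply intervalIntegral.integral_congr
      intro t _
      show lam t * (Lx t * η t + Lv t * deriv η t) = _
      rw [hEdef]
      ring
    have h0 := hVan η hη hηa
    rw [hsplit, hFTC, hηa] at h0
    have : lam a * Lv a * 0 = 0 := by ring
    rw [this, sub_zero] at h0
    linarith
  -- fundamental lemma: E vanishes on [a, b]
  have hEL : ∀ t₁ ∈ Icc a b, E t₁ = 0 := by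
    intro t₁ ht₁
    by_contra hE0
    have hEc := hEcont t₁ ht₁
    rw [Metric.continuousWithinAt_iff] at hEc
    obtain ⟨δ, hδpos, hδP⟩ := hEc (|E t₁| / 2) (by positivity)
    set c₁ : ℝ := max a (t₁ - δ/2) with hc₁def
    set d₁ : ℝ := min b (t₁ + δ/2) with hd₁def
    have hc₁d₁ : c₁ < d₁ := by
      apply max_lt_iff.2
      constructor
      · exact lt_min_iff.2 ⟨hab, by nlinarith [ht₁.1]⟩
      · exact lt_min_iff.2 ⟨by nlinarith [ht₁.2], by linarith⟩
    have hsub1 : Ioo c₁ d₁ ⊆ Icc a b := fun t ht =>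
      ⟨le_of_lt (lt_of_le_of_lt (le_max_left _ _) ht.1),
       le_of_lt (lt_of_lt_of_le ht.2 (min_le_left _ _))⟩
    have hsign : ∀ t ∈ Ioo c₁ d₁, |E t - E t₁| < |E t₁| / 2 := by
      intro t ht
      have hdist : dist t t₁ < δ := by
        rw [Real.dist_eq, abs_lt]
        have h1 : t₁ - δ/2 ≤ c₁ := le_max_right _ _
        have h2 : d₁ ≤ t₁ + δ/2 := min_le_right _ _
        constructor
        · nlinarith [ht.1]
        · nlinarith [ht.2]
      have := hδP (hsub1 ht) hdist
      rwa [Real.dist_eq] at this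
    set ctr : ℝ := (c₁ + d₁) / 2 with hctrdef
    set rad : ℝ := (d₁ - c₁) / 2 with hraddef
    have hradpos : 0 < rad := by rw [hraddef]; linarith
    have hf1 : (0:ℝ) < rad/2 := by linarith
    have hf2 : rad/2 < rad := by linarith
    set f : ContDiffBump ctr := ⟨rad/2, rad, hf1, hf2⟩ with hfdef
    have hηsupp : ∀ t : ℝ, t ∉ Ioo c₁ d₁ → f t = 0 := by
      intro t ht
      apply f.zero_of_le_dist
      show rad ≤ dist t ctr
      rw [Real.dist_eq]
      by_contra hcon
      push_neg at hcon
      rw [abs_lt] at hcon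
      exact ht ⟨by rw [hc₁def] at *; nlinarith [hcon.1], by nlinarith [hcon.2]⟩
    have hηa' : f a = 0 := hηsupp a (fun hcon => absurd hcon.1 (not_lt.2 (le_max_left _ _)))
    have hηb' : f b = 0 := hηsupp b (fun hcon => absurd hcon.2 (not_lt.2 (min_le_left _ _)))
    have h := hParts (⇑f) f.contDiff hηa'
    have htot : (∫ t in a..b, lam t * f t * E t) = 0 := by
      rw [h, hηb']
      ring
    have hIcc1 : a ≤ c₁ := le_max_left _ _
    have hIcc2 : d₁ ≤ b := min_le_left _ _
    have hintf : ∀ u v' : ℝ, a ≤ u → u ≤ v' → v' ≤ b →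
        IntervalIntegrable (fun t => lam t * f t * E t) volume u v' := by
      intro u v' h1 h2 h3
      apply ContinuousOn.intervalIntegrable
      rw [uIcc_of_le h2]
      apply ContinuousOn.mono
        ((hlamcont.continuousOn.mul f.continuous.continuousOn).mul hEcont)
      exact Icc_subset_Icc h1 h3
    have e1 : (∫ t in a..c₁, lam t * f t * E t) + (∫ t in c₁..d₁, lam t * f t * E t) =
        ∫ t in a..d₁, lam t * f t * E t :=
      intervalIntegral.integral_add_adjacent_intervals
        (hintf a c₁ le_rfl hIcc1 (by linarith))
        (hintf c₁ d₁ hIcc1 hc₁d₁.le hIcc2)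
    have e2 : (∫ t in a..d₁, lam t * f t * E t) + (∫ t in d₁..b, lam t * f t * E t) =
        ∫ t in a..b, lam t * f t * E t :=
      intervalIntegral.integral_add_adjacent_intervals
        (hintf a d₁ le_rfl (by linarith) hIcc2)
        (hintf d₁ b (by linarith) hIcc2 le_rfl)
    have z1 : (∫ t in a..c₁, lam t * f t * E t) = 0 := by
      have hz : ∀ t ∈ uIcc a c₁, lam t * f t * E t = 0 := by
        intro t ht
        rw [uIcc_of_le hIcc1] at ht
        rw [hηsupp t (fun hcon => absurd hcon.1 (not_lt.2 ht.2))]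
        ring
      calc (∫ t in a..c₁, lam t * f t * E t) = ∫ _ in a..c₁, (0:ℝ) :=
            intervalIntegral.integral_congr hz
        _ = 0 := intervalIntegral.integral_zero
    have z2 : (∫ t in d₁..b, lam t * f t * E t) = 0 := by
      have hz : ∀ t ∈ uIcc d₁ b, lam t * f t * E t = 0 := by
        intro t ht
        rw [uIcc_of_le hIcc2] at ht
        rw [hηsupp t (fun hcon => absurd hcon.2 (not_lt.2 ht.1))]
        ring
      calc (∫ t in d₁..b, lam t * f t * E t) = ∫ _ in d₁..b, (0:ℝ) :=
            intervalIntegral.integral_congr hz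
        _ = 0 := intervalIntegral.integral_zero
    have hmid : (∫ t in c₁..d₁, lam t * f t * E t) = 0 := by
      have := htot
      rw [← e2, ← e1, z1, z2] at this
      linarith
    have hfpos : ∀ t ∈ Ioo c₁ d₁, 0 < f t := by
      intro t ht
      apply f.pos_of_mem_ball
      show dist t ctr < rad
      rw [Real.dist_eq, abs_lt]
      constructor
      · rw [hctrdef, hraddef]; nlinarith [ht.1]
      · rw [hctrdef, hraddef]; nlinarith [ht.2]
    rcases lt_or_gt_of_ne hE0 with hneg | hpos
    · -- E t₁ < 0 : the middle integral is negative
      have habs : |E t₁| = -(E t₁) := abs_of_neg hneg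
      have hEneg : ∀ t ∈ Ioo c₁ d₁, E t < 0 := by
        intro t ht
        have := hsign t ht
        rw [habs] at this
        have h2 := (abs_lt.1 this).2
        linarith
      have hposmid : 0 < ∫ t in c₁..d₁, -(lam t * f t * E t) := by
        apply intervalIntegral_pos_of_pos_on
        · exact (hintf c₁ d₁ hIcc1 hc₁d₁.le hIcc2).neg
        · intro t ht
          have h1 := hlampos t
          have h2 := hfpos t ht
          have h3 := hEneg t ht
          nlinarith [mul_pos h1 h2]
        · exact hc₁d₁
      rw [intervalIntegral.integral_neg, hmid] at hposmid
      simp at hposmid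
    · -- E t₁ > 0 : the middle integral is positive
      have habs : |E t₁| = E t₁ := abs_of_pos hpos
      have hEpos : ∀ t ∈ Ioo c₁ d₁, 0 < E t := by
        intro t ht
        have := hsign t ht
        rw [habs] at this
        have h2 := (abs_lt.1 this).1
        linarith
      have hposmid : 0 < ∫ t in c₁..d₁, lam t * f t * E t := by
        apply intervalIntegral_pos_of_pos_on
        · exact hintf c₁ d₁ hIcc1 hc₁d₁.le hIcc2
        · intro t ht
          exact mul_pos (mul_pos (hlampos t) (hfpos t ht)) (hEpos t ht)
        · exact hc₁d₁
      rw [hmid] at hposmid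
      exact lt_irrefl 0 hposmid
  -- transversality via a bump equal to 1 at b
  have hLvb : Lv b = 0 := by
    have hf1 : (0:ℝ) < (b - a)/2 := by linarith
    have hf2 : (b - a)/2 < b - a := by linarith
    set f : ContDiffBump b := ⟨(b - a)/2, b - a, hf1, hf2⟩ with hfdef
    have hηa' : f a = 0 := by
      apply f.zero_of_le_dist
      show b - a ≤ dist a b
      rw [Real.dist_eq, abs_sub_comm, abs_of_pos (by linarith : (0:ℝ) < b - a)]
    have hηb' : f b = 1 := f.one_of_mem_closedBall
      (Metric.mem_closedBall_self (by show (0:ℝ) ≤ (b - a)/2; linarith))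
    have h := hParts (⇑f) f.contDiff hηa'
    have htot : (∫ t in a..b, lam t * f t * E t) = 0 := by
      have hz : ∀ t ∈ uIcc a b, lam t * f t * E t = 0 := by
        intro t ht
        rw [uIcc_of_le hab.le] at ht
        rw [hEL t ht]
        ring
      calc (∫ t in a..b, lam t * f t * E t) = ∫ _ in a..b, (0:ℝ) :=
            intervalIntegral.integral_congr hz
        _ = 0 := intervalIntegral.integral_zero
    rw [htot, hηb'] at h
    have hlb := hlampos b
    have h2 : lam b * Lv b = 0 := by linarith [h]
    rcases mul_eq_zero.1 h2 with h3 | h3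
    · exact absurd h3 (ne_of_gt hlb)
    · exact h3
  refine ⟨fun t ht => ?_, by rw [hLvb]; ring, hLvb⟩
  have h := hEL t ht
  rw [hEdef] at h
  exact h
end

section
/- Explicit extremal for the linear-in-z problem: The functions x(t) = ((1-t)e^{t+1} + (2t-1)e^t + (e-3)et - e + 1)/(e² - 3e + 1) and z(t) = [((1+t²)e^{t+2} - 2(2t²+t+2)e^{t+1} + (4t²+4t+5)e^t + e⁴ - 6e³ + 10e² - 2e - 4)·e^t]/(e²-3e+1)² on [0,1] satisfy ż(t) = ẍ(t)² + z(t), x⁽⁴⁾(t) - 2x⁽³⁾(t) + ẍ(t) = 0, z(0) = 1, x(0) = 0, ẋ(0) = 1, x(1) = 1, ẋ(1) = 0, and z(1) = (e² - e - 4)e/(e² - 3e + 1). -/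
private lemma lin_hasDerivAt (a b t : ℝ) : HasDerivAt (fun s : ℝ => a * s + b) a t := by
  simpa using ((hasDerivAt_id t).const_mul a).add_const b

private lemma quad_hasDerivAt (a b c t : ℝ) :
    HasDerivAt (fun s : ℝ => a * s ^ 2 + b * s + c) (2 * a * t + b) t := by
  have h1 : HasDerivAt (fun s : ℝ => s ^ 2) (2 * t) t := by
    simpa using hasDerivAt_pow 2 t
  have h := (h1.const_mul a).add (lin_hasDerivAt b c t)
  have hf : (fun s : ℝ => a * s ^ 2 + b * s + c) = (fun y => a * y ^ 2) + fun s => b * s + c := by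
    funext s; simp only [Pi.add_apply]; ring
  rw [hf]; exact h.congr_deriv (by ring)

/-- Explicit extremal for the linear-in-z second-order Herglotz problem
ż = ẍ² + z, z(0) = 1. -/
theorem herglotz_linear_in_z_extremal
    (e : ℝ) (he : e = Real.exp 1) (x z : ℝ → ℝ)
    (hx : ∀ t, x t =
      ((1 - t) * Real.exp (t + 1) + (2 * t - 1) * Real.exp t + (e - 3) * e * t
        - e + 1) / (e ^ 2 - 3 * e + 1))
    (hz : ∀ t, z t =
      (((1 + t ^ 2) * Real.exp (t + 2) - 2 * (2 * t ^ 2 + t + 2) * Real.exp (t + 1)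
          + (4 * t ^ 2 + 4 * t + 5) * Real.exp t
          + e ^ 4 - 6 * e ^ 3 + 10 * e ^ 2 - 2 * e - 4) * Real.exp t) /
        (e ^ 2 - 3 * e + 1) ^ 2) :
    (∀ t ∈ Set.Icc (0 : ℝ) 1,
      HasDerivAt z ((iteratedDeriv 2 x t) ^ 2 + z t) t) ∧
    (∀ t ∈ Set.Icc (0 : ℝ) 1,
      iteratedDeriv 4 x t - 2 * iteratedDeriv 3 x t + iteratedDeriv 2 x t = 0) ∧
    z 0 = 1 ∧ x 0 = 0 ∧ deriv x 0 = 1 ∧ x 1 = 1 ∧ deriv x 1 = 0 ∧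
    z 1 = (e ^ 2 - e - 4) * e / (e ^ 2 - 3 * e + 1) := by
  have hegt : (2.7182818283 : ℝ) < e := he ▸ Real.exp_one_gt_d9
  have helt : e < 2.7182818286 := he ▸ Real.exp_one_lt_d9
  have hD : e ^ 2 - 3 * e + 1 ≠ 0 := by nlinarith
  have hE1 : ∀ t : ℝ, Real.exp (t + 1) = Real.exp t * e := fun t => by
    rw [Real.exp_add, he]
  have hE2 : ∀ t : ℝ, Real.exp (t + 2) = Real.exp t * e ^ 2 := fun t => by
    rw [show t + 2 = t + 1 + 1 by ring, Real.exp_add, Real.exp_add, he]; ring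
  -- normal forms
  have hx2 : x = fun t => (((2 - e) * t + (e - 1)) * Real.exp t
      + ((e - 3) * e * t + (1 - e))) / (e ^ 2 - 3 * e + 1) := by
    funext t; rw [hx, hE1]; ring
  have hz2 : z = fun t => (((e ^ 2 - 4 * e + 4) * t ^ 2 + (-2 * e + 4) * t
      + (e ^ 2 - 4 * e + 5)) * Real.exp t ^ 2
      + (e ^ 4 - 6 * e ^ 3 + 10 * e ^ 2 - 2 * e - 4) * Real.exp t) /
      (e ^ 2 - 3 * e + 1) ^ 2 := by
    funext t; rw [hz, hE2, hE1]; ring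
  -- derivative chain for x
  have Hx : ∀ t, HasDerivAt x ((((2 - e) * t + 1) * Real.exp t + (e - 3) * e)
      / (e ^ 2 - 3 * e + 1)) t := by
    intro t
    rw [hx2]
    have h := (((lin_hasDerivAt (2 - e) (e - 1) t).mul (Real.hasDerivAt_exp t)).add
      (lin_hasDerivAt ((e - 3) * e) (1 - e) t)).div_const (e ^ 2 - 3 * e + 1)
    exact h.congr_deriv (by ring)
  have hdx : deriv x = fun t => (((2 - e) * t + 1) * Real.exp t + (e - 3) * e)
      / (e ^ 2 - 3 * e + 1) := funext fun t => (Hx t).deriv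
  have Hx1 : ∀ t, HasDerivAt (fun t => (((2 - e) * t + 1) * Real.exp t + (e - 3) * e)
      / (e ^ 2 - 3 * e + 1))
      ((((2 - e) * t + (3 - e)) * Real.exp t) / (e ^ 2 - 3 * e + 1)) t := by
    intro t
    have h := (((lin_hasDerivAt (2 - e) 1 t).mul (Real.hasDerivAt_exp t)).add_const
      ((e - 3) * e)).div_const (e ^ 2 - 3 * e + 1)
    exact h.congr_deriv (by ring)
  have hdx1 : deriv (fun t => (((2 - e) * t + 1) * Real.exp t + (e - 3) * e)
      / (e ^ 2 - 3 * e + 1))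
      = fun t => (((2 - e) * t + (3 - e)) * Real.exp t) / (e ^ 2 - 3 * e + 1) :=
    funext fun t => (Hx1 t).deriv
  have Hgen : ∀ a b t : ℝ, HasDerivAt (fun t => ((a * t + b) * Real.exp t)
      / (e ^ 2 - 3 * e + 1))
      (((a * t + (a + b)) * Real.exp t) / (e ^ 2 - 3 * e + 1)) t := by
    intro a b t
    have h := ((lin_hasDerivAt a b t).mul (Real.hasDerivAt_exp t)).div_const
      (e ^ 2 - 3 * e + 1)
    exact h.congr_deriv (by ring)
  have hdx2 : deriv (fun t => (((2 - e) * t + (3 - e)) * Real.exp t) / (e ^ 2 - 3 * e + 1))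
      = fun t => (((2 - e) * t + (5 - 2 * e)) * Real.exp t) / (e ^ 2 - 3 * e + 1) := by
    funext t
    have := (Hgen (2 - e) (3 - e) t).deriv
    rw [this]; ring_nf
  have hdx3 : deriv (fun t => (((2 - e) * t + (5 - 2 * e)) * Real.exp t) / (e ^ 2 - 3 * e + 1))
      = fun t => (((2 - e) * t + (7 - 3 * e)) * Real.exp t) / (e ^ 2 - 3 * e + 1) := by
    funext t
    have := (Hgen (2 - e) (5 - 2 * e) t).deriv
    rw [this]; ring_nf
  have hi2 : iteratedDeriv 2 x = fun t => (((2 - e) * t + (3 - e)) * Real.exp t)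
      / (e ^ 2 - 3 * e + 1) := by
    show iteratedDeriv (1+1) x = _
    rw [iteratedDeriv_succ, iteratedDeriv_one, hdx, hdx1]
  have hi3 : iteratedDeriv 3 x = fun t => (((2 - e) * t + (5 - 2 * e)) * Real.exp t)
      / (e ^ 2 - 3 * e + 1) := by
    show iteratedDeriv (2+1) x = _
    rw [iteratedDeriv_succ, hi2, hdx2]
  have hi4 : iteratedDeriv 4 x = fun t => (((2 - e) * t + (7 - 3 * e)) * Real.exp t)
      / (e ^ 2 - 3 * e + 1) := by
    show iteratedDeriv (3+1) x = _
    rw [iteratedDeriv_succ, hi3, hdx3]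
  -- derivative of z
  have Hz : ∀ t, HasDerivAt z
      (((2 * (e ^ 2 - 4 * e + 4) * t + (-2 * e + 4)
          + 2 * ((e ^ 2 - 4 * e + 4) * t ^ 2 + (-2 * e + 4) * t + (e ^ 2 - 4 * e + 5)))
            * Real.exp t ^ 2
        + (e ^ 4 - 6 * e ^ 3 + 10 * e ^ 2 - 2 * e - 4) * Real.exp t) /
        (e ^ 2 - 3 * e + 1) ^ 2) t := by
    intro t
    rw [hz2]
    have hq := quad_hasDerivAt (e ^ 2 - 4 * e + 4) (-2 * e + 4) (e ^ 2 - 4 * e + 5) t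
    have hE : HasDerivAt (fun s : ℝ => Real.exp s ^ 2)
        ((2 : ℕ) * Real.exp t ^ 1 * Real.exp t) t := (Real.hasDerivAt_exp t).pow 2
    have h := ((hq.mul hE).add ((Real.hasDerivAt_exp t).const_mul
      (e ^ 4 - 6 * e ^ 3 + 10 * e ^ 2 - 2 * e - 4))).div_const ((e ^ 2 - 3 * e + 1) ^ 2)
    exact h.congr_deriv (by push_cast; ring)
  refine ⟨?_, ?_, ?_, ?_, ?_, ?_, ?_, ?_⟩
  · intro t _
    have key : ((2 * (e ^ 2 - 4 * e + 4) * t + (-2 * e + 4)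
          + 2 * ((e ^ 2 - 4 * e + 4) * t ^ 2 + (-2 * e + 4) * t + (e ^ 2 - 4 * e + 5)))
            * Real.exp t ^ 2
        + (e ^ 4 - 6 * e ^ 3 + 10 * e ^ 2 - 2 * e - 4) * Real.exp t) /
        (e ^ 2 - 3 * e + 1) ^ 2 = (iteratedDeriv 2 x t) ^ 2 + z t := by
      rw [hi2, hz2]
      field_simp
      ring
    exact key ▸ Hz t
  · intro t _
    rw [hi2, hi3, hi4]
    field_simp
    ring
  · simp only [hz2, Real.exp_zero]; rw [div_eq_iff (pow_ne_zero 2 hD)]; ring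
  · simp only [hx2, Real.exp_zero]; field_simp; try ring
  · simp only [hdx, Real.exp_zero]; rw [div_eq_iff hD]; ring
  · simp only [hx2]; rw [show Real.exp 1 = e from he.symm]; rw [div_eq_iff hD]; ring
  · simp only [hdx]; rw [show Real.exp 1 = e from he.symm]; field_simp; try ring
  · simp only [hz2]; rw [show Real.exp 1 = e from he.symm]; rw [div_eq_div_iff (pow_ne_zero 2 hD) hD]; ring
end
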